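/- For k > 0, the function Ĉ(k,·) defined by Ĉ(k,c) = 1 - ∫₀^c (2k / Y_BS(k,u)²) du is convex on (0,1) and is an involution: Ĉ(k, Ĉ(k,c)) = c for all 0 < c < 1. -/

import Mathlib

open MeasureTheory Real Filter Asymptotics Set

/-- Standard normal density. -/
noncomputable def phi (z : ℝ) : ℝ := (Real.sqrt (2 * Real.pi))⁻¹ * Real.exp (-z ^ 2 / 2)

/-- Standard normal CDF. -/
noncomputable def Phi (x : ℝ) : ℝ := ∫ z in Set.Iic x, phi z

/-- Black–Scholes normalized call price. -/
noncomputable def CBS (k y : ℝ) : ℝ :=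
  if 0 < y then Phi (-k / y + y / 2) - Real.exp k * Phi (-k / y - y / 2)
  else max (1 - Real.exp k) 0

/-- Implied total standard deviation: inverse of `CBS k` on `[0,∞)`. -/
noncomputable def YBS (k c : ℝ) : ℝ := sInf {y : ℝ | 0 ≤ y ∧ CBS k y = c}

/-- Inverse of the standard normal CDF on (0,1). -/
noncomputable def PhiInv (u : ℝ) : ℝ := sInf {x : ℝ | u ≤ Phi x}

/-- Extended-real quantile with the convention `Φ⁻¹(u) = +∞` for `u ≥ 1`, `-∞` for `u ≤ 0`. -/
noncomputable def PhiInvE (u : ℝ) : EReal :=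
  if 1 ≤ u then ⊤ else if u ≤ 0 then ⊥ else ((PhiInv u : ℝ) : EReal)

open Topology

set_option maxHeartbeats 1000000

lemma phi_eq : phi = ProbabilityTheory.gaussianPDFReal 0 1 := by
  ext z
  simp [phi, ProbabilityTheory.gaussianPDFReal]

lemma phi_pos (z : ℝ) : 0 < phi z := by
  unfold phi; positivity

lemma phi_cont : Continuous phi := by
  unfold phi; continuity

lemma phi_integrable : Integrable phi := by
  rw [phi_eq]; exact ProbabilityTheory.integrable_gaussianPDFReal 0 1

lemma phi_integral_one : ∫ z, phi z = 1 := by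
  rw [phi_eq]; exact ProbabilityTheory.integral_gaussianPDFReal_eq_one 0 one_ne_zero

lemma Phi_sub (a b : ℝ) : Phi b - Phi a = ∫ z in a..b, phi z := by
  exact intervalIntegral.integral_Iic_sub_Iic (phi_integrable.integrableOn) (phi_integrable.integrableOn)

lemma hasDerivAt_Phi (x : ℝ) : HasDerivAt Phi (phi x) x := by
  have : Phi = fun x => Phi 0 + ∫ z in (0:ℝ)..x, phi z := by
    funext x; rw [← Phi_sub]; ring
  rw [this]
  exact (intervalIntegral.integral_hasDerivAt_right
    phi_integrable.intervalIntegrable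
    (phi_cont.stronglyMeasurable.stronglyMeasurableAtFilter)
    phi_cont.continuousAt).const_add _

lemma Phi_strictMono : StrictMono Phi :=
  strictMono_of_deriv_pos (fun x => by rw [(hasDerivAt_Phi x).deriv]; exact phi_pos x)

lemma Phi_continuous : Continuous Phi := by
  have : Differentiable ℝ Phi := fun x => (hasDerivAt_Phi x).differentiableAt
  exact this.continuous

lemma Phi_tendsto_atTop : Tendsto Phi atTop (𝓝 1) := by
  have h0 : Phi = fun x => Phi 0 + ∫ z in (0:ℝ)..x, phi z := by
    funext x; rw [← Phi_sub]; ring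
  have h1 : Tendsto (fun x : ℝ => ∫ z in (0:ℝ)..x, phi z) atTop
      (𝓝 (∫ z in Ioi (0:ℝ), phi z)) :=
    intervalIntegral_tendsto_integral_Ioi 0 phi_integrable.integrableOn tendsto_id
  have h2 : Phi 0 + ∫ z in Ioi (0:ℝ), phi z = 1 := by
    rw [Phi, intervalIntegral.integral_Iic_add_Ioi (b := (0:ℝ)) phi_integrable.integrableOn
      phi_integrable.integrableOn, phi_integral_one]
  rw [h0, ← h2]
  exact tendsto_const_nhds.add h1

lemma Phi_tendsto_atBot : Tendsto Phi atBot (𝓝 0) := by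
  have h1 : Tendsto (fun x : ℝ => ∫ z in x..(0:ℝ), phi z) atBot
      (𝓝 (∫ z in Iic (0:ℝ), phi z)) :=
    intervalIntegral_tendsto_integral_Iic 0 phi_integrable.integrableOn tendsto_id
  have h0 : Phi = fun x => Phi 0 - ∫ z in x..(0:ℝ), phi z := by
    funext x; rw [← Phi_sub]; ring
  have h2 : Phi 0 - ∫ z in Iic (0:ℝ), phi z = 0 := by rw [Phi]; ring
  have h3 := (tendsto_const_nhds (x := Phi 0) (f := atBot)).sub h1
  rw [h2] at h3
  exact h0 ▸ h3

lemma Phi_pos (x : ℝ) : 0 < Phi x := by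
  have h := Phi_sub (x - 1) x
  have hpos : 0 < ∫ z in (x-1)..x, phi z :=
    intervalIntegral.intervalIntegral_pos_of_pos (phi_integrable.intervalIntegrable)
      (fun z => phi_pos z) (by linarith)
  have hge : 0 ≤ Phi (x - 1) := setIntegral_nonneg measurableSet_Iic (fun z _ => (phi_pos z).le)
  linarith

lemma Phi_lt_one (x : ℝ) : Phi x < 1 := by
  have h := Phi_sub x (x + 1)
  have hpos : 0 < ∫ z in x..(x+1), phi z :=
    intervalIntegral.intervalIntegral_pos_of_pos (phi_integrable.intervalIntegrable)
      (fun z => phi_pos z) (by linarith)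
  have hle : Phi (x + 1) ≤ 1 := by
    rw [Phi, ← phi_integral_one]
    exact setIntegral_le_integral phi_integrable (ae_of_all _ fun z => (phi_pos z).le)
  linarith

lemma vega_identity {k y : ℝ} (hy : y ≠ 0) :
    Real.exp k * phi (-k / y - y / 2) = phi (-k / y + y / 2) := by
  unfold phi
  rw [mul_left_comm, ← Real.exp_add]
  congr 2
  field_simp
  ring

lemma hasDerivAt_CBS (k : ℝ) {y : ℝ} (hy : 0 < y) :
    HasDerivAt (CBS k) (phi (-k / y + y / 2)) y := by
  have hys : ∀ᶠ z in 𝓝 y, CBS k z =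
      Phi (-k / z + z / 2) - Real.exp k * Phi (-k / z - z / 2) := by
    filter_upwards [eventually_gt_nhds hy] with z hz
    simp [CBS, hz]
  have hd1 : HasDerivAt (fun z : ℝ => -k / z + z / 2) (k / y ^ 2 + 1 / 2) y := by
    have h1 : HasDerivAt (fun z : ℝ => -k / z) (k / y ^ 2) y := by
      have h0 := (hasDerivAt_inv hy.ne').const_mul (-k)
      simp only [div_eq_mul_inv]
      refine h0.congr_deriv ?_
      ring
    exact (h1.add ((hasDerivAt_id y).div_const 2)).congr_deriv (by ring)
  have hd2 : HasDerivAt (fun z : ℝ => -k / z - z / 2) (k / y ^ 2 - 1 / 2) y := by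
    have h1 : HasDerivAt (fun z : ℝ => -k / z) (k / y ^ 2) y := by
      have h0 := (hasDerivAt_inv hy.ne').const_mul (-k)
      simp only [div_eq_mul_inv]
      refine h0.congr_deriv ?_
      ring
    exact (h1.sub ((hasDerivAt_id y).div_const 2)).congr_deriv (by ring)
  have h1 := (hasDerivAt_Phi (-k / y + y / 2)).comp y hd1
  have h2 := ((hasDerivAt_Phi (-k / y - y / 2)).comp y hd2).const_mul (Real.exp k)
  have h := h1.sub h2
  have heq : (fun z => Phi (-k / z + z / 2) - Real.exp k * Phi (-k / z - z / 2)) =ᶠ[𝓝 y] CBS k :=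
    hys.mono fun z hz => hz.symm
  refine HasDerivAt.congr_of_eventuallyEq ?_ heq.symm
  refine h.congr_deriv ?_
  have hv := vega_identity (k := k) hy.ne'
  rw [show Real.exp k * (phi (-k / y - y / 2) * (k / y ^ 2 - 1 / 2))
      = (Real.exp k * phi (-k / y - y / 2)) * (k / y ^ 2 - 1 / 2) by ring, hv]
  ring

lemma CBS_tendsto_zero {k : ℝ} (hk : 0 < k) : Tendsto (CBS k) (𝓝[>] (0:ℝ)) (𝓝 0) := by
  have hhalf : Tendsto (fun y : ℝ => y / 2) (𝓝[>] (0:ℝ)) (𝓝 0) := by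
    have h0 : Tendsto (fun y : ℝ => y / 2) (𝓝 (0:ℝ)) (𝓝 (0/2)) :=
      (continuous_id.div_const 2).tendsto 0
    simpa using h0.mono_left nhdsWithin_le_nhds
  have hneg : Tendsto (fun y : ℝ => -k / y) (𝓝[>] (0:ℝ)) atBot := by
    have h2 := (tendsto_inv_nhdsGT_zero (𝕜 := ℝ)).const_mul_atTop hk
    simp_rw [neg_div, div_eq_mul_inv]
    exact tendsto_neg_atBot_iff.mpr h2
  have hd1 : Tendsto (fun y : ℝ => -k / y + y / 2) (𝓝[>] (0:ℝ)) atBot :=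
    hneg.atBot_add hhalf
  have hd2 : Tendsto (fun y : ℝ => -k / y - y / 2) (𝓝[>] (0:ℝ)) atBot :=
    hneg.atBot_add (hhalf.neg.congr fun y => by ring)
  have h1 := Phi_tendsto_atBot.comp hd1
  have h2 := (Phi_tendsto_atBot.comp hd2).const_mul (Real.exp k)
  have h := h1.sub h2
  simp only [mul_zero, sub_zero] at h
  refine h.congr' ?_
  filter_upwards [self_mem_nhdsWithin] with y (hy : 0 < y)
  simp [CBS, hy, Function.comp]

lemma CBS_tendsto_one {k : ℝ} (hk : 0 < k) : Tendsto (CBS k) atTop (𝓝 1) := by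
  have hinv : Tendsto (fun y : ℝ => -k / y) atTop (𝓝 0) := by
    have h0 := (tendsto_inv_atTop_zero (𝕜 := ℝ)).const_mul (-k)
    simp only [mul_zero] at h0
    simpa [neg_div, div_eq_mul_inv] using h0
  have hd1 : Tendsto (fun y : ℝ => -k / y + y / 2) atTop atTop := by
    have : Tendsto (fun y : ℝ => y / 2) atTop atTop := tendsto_id.atTop_div_const two_pos
    exact hinv.add_atTop this
  have hd2 : Tendsto (fun y : ℝ => -k / y - y / 2) atTop atBot := by
    have : Tendsto (fun y : ℝ => -(y / 2)) atTop atBot :=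
      tendsto_neg_atBot_iff.mpr (tendsto_id.atTop_div_const two_pos)
    exact (hinv.add_atBot this).congr fun y => by ring
  have h1 := Phi_tendsto_atTop.comp hd1
  have h2 := (Phi_tendsto_atBot.comp hd2).const_mul (Real.exp k)
  have h := h1.sub h2
  simp only [mul_zero, sub_zero] at h
  refine h.congr' ?_
  filter_upwards [eventually_gt_atTop (0:ℝ)] with y hy
  simp [CBS, hy, Function.comp]

lemma CBS_strictMonoOn {k : ℝ} : StrictMonoOn (CBS k) (Ioi 0) := by
  refine strictMonoOn_of_deriv_pos (convex_Ioi 0) ?_ ?_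
  · intro y hy
    exact ((hasDerivAt_CBS k hy).continuousAt).continuousWithinAt
  · intro y hy
    rw [interior_Ioi] at hy
    rw [(hasDerivAt_CBS k hy).deriv]
    exact phi_pos _

lemma CBS_nonneg {k : ℝ} (hk : 0 < k) {y : ℝ} (hy : 0 < y) : 0 ≤ CBS k y := by
  refine le_of_tendsto (CBS_tendsto_zero hk) ?_
  filter_upwards [Ioo_mem_nhdsGT_of_mem (by constructor <;> linarith : (0:ℝ) ∈ Ico 0 y)]
    with ε hε
  exact (CBS_strictMonoOn hε.1 hy hε.2).le

lemma CBS_pos {k : ℝ} (hk : 0 < k) {y : ℝ} (hy : 0 < y) : 0 < CBS k y :=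
  lt_of_le_of_lt (CBS_nonneg hk (by linarith : (0:ℝ) < y/2))
    (CBS_strictMonoOn (by simp; linarith) (by simpa using hy) (by linarith))

lemma CBS_lt_one {k y : ℝ} (hy : 0 < y) : CBS k y < 1 := by
  have h1 : Phi (-k / y + y / 2) < 1 := Phi_lt_one _
  have h2 : 0 < Real.exp k * Phi (-k / y - y / 2) :=
    mul_pos (Real.exp_pos k) (Phi_pos _)
  simp only [CBS, if_pos hy]
  linarith

lemma CBS_zero {k : ℝ} (hk : 0 < k) : CBS k 0 = 0 := by
  have h1 : 1 - Real.exp k < 0 := by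
    have := Real.one_lt_exp_iff (x := k) |>.mpr hk
    linarith
  simp [CBS, max_eq_right h1.le]

lemma exists_CBS_eq {k : ℝ} (hk : 0 < k) {c : ℝ} (hc : c ∈ Ioo (0:ℝ) 1) :
    ∃ y, 0 < y ∧ CBS k y = c := by
  obtain ⟨a, ha, hca⟩ : ∃ a, 0 < a ∧ CBS k a < c := by
    have h := (CBS_tendsto_zero hk).eventually (eventually_lt_nhds hc.1)
    rcases (h.and self_mem_nhdsWithin).exists with ⟨a, h1, h2⟩
    exact ⟨a, h2, h1⟩
  obtain ⟨b, hab, hcb⟩ : ∃ b, a < b ∧ c < CBS k b := by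
    have h := (CBS_tendsto_one hk).eventually (eventually_gt_nhds hc.2)
    rcases (h.and (eventually_gt_atTop a)).exists with ⟨b, h1, h2⟩
    exact ⟨b, h2, h1⟩
  have hcont : ContinuousOn (CBS k) (Icc a b) := fun y hy =>
    ((hasDerivAt_CBS k (lt_of_lt_of_le ha hy.1)).continuousAt).continuousWithinAt
  have := intermediate_value_Icc hab.le hcont
  obtain ⟨y, hy, hcy⟩ := this ⟨hca.le, hcb.le⟩
  exact ⟨y, lt_of_lt_of_le ha hy.1, hcy⟩

lemma YBS_spec {k : ℝ} (hk : 0 < k) {c : ℝ} (hc : c ∈ Ioo (0:ℝ) 1) :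
    0 < YBS k c ∧ CBS k (YBS k c) = c := by
  obtain ⟨y, hy, hcy⟩ := exists_CBS_eq hk hc
  have hset : {y' : ℝ | 0 ≤ y' ∧ CBS k y' = c} = {y} := by
    ext y'
    simp only [mem_setOf_eq, mem_singleton_iff]
    constructor
    · rintro ⟨h0, hc'⟩
      rcases h0.lt_or_eq with h0' | h0'
      · exact CBS_strictMonoOn.injOn h0' hy (hc'.trans hcy.symm)
      · exfalso
        rw [← h0', CBS_zero hk] at hc'
        exact absurd hc'.symm (ne_of_gt hc.1)
    · rintro rfl
      exact ⟨hy.le, hcy⟩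
  rw [YBS, hset, csInf_singleton]
  exact ⟨hy, hcy⟩

lemma YBS_CBS {k : ℝ} (hk : 0 < k) {y : ℝ} (hy : 0 < y) : YBS k (CBS k y) = y := by
  have hmem : CBS k y ∈ Ioo (0:ℝ) 1 := ⟨CBS_pos hk hy, CBS_lt_one hy⟩
  obtain ⟨h1, h2⟩ := YBS_spec hk hmem
  exact CBS_strictMonoOn.injOn h1 hy h2

lemma YBS_strictMonoOn {k : ℝ} (hk : 0 < k) : StrictMonoOn (YBS k) (Ioo (0:ℝ) 1) := by
  intro c hc c' hc' hlt
  obtain ⟨h1, h2⟩ := YBS_spec hk hc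
  obtain ⟨h1', h2'⟩ := YBS_spec hk hc'
  by_contra hge
  push_neg at hge
  have h3 := (CBS_strictMonoOn (k := k)).monotoneOn h1' h1 hge
  rw [h2, h2'] at h3
  exact absurd h3 (not_le.mpr hlt)

lemma YBS_continuousAt {k : ℝ} (hk : 0 < k) {c : ℝ} (hc : c ∈ Ioo (0:ℝ) 1) :
    ContinuousAt (YBS k) c := by
  refine (YBS_strictMonoOn hk).continuousAt_of_image_mem_nhds
    (isOpen_Ioo.mem_nhds hc) ?_
  have himg : Ioi (0:ℝ) ⊆ YBS k '' Ioo 0 1 := by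
    intro y hy
    exact ⟨CBS k y, ⟨CBS_pos hk hy, CBS_lt_one hy⟩, YBS_CBS hk hy⟩
  exact mem_of_superset (Ioi_mem_nhds (YBS_spec hk hc).1) himg

lemma hasDerivAt_YBS {k : ℝ} (hk : 0 < k) {c : ℝ} (hc : c ∈ Ioo (0:ℝ) 1) :
    HasDerivAt (YBS k) (phi (-k / YBS k c + YBS k c / 2))⁻¹ c := by
  refine HasDerivAt.of_local_left_inverse (YBS_continuousAt hk hc)
    (hasDerivAt_CBS k (YBS_spec hk hc).1) (ne_of_gt (phi_pos _)) ?_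
  filter_upwards [isOpen_Ioo.mem_nhds hc] with u hu
  exact (YBS_spec hk hu).2

lemma phi_neg (x : ℝ) : phi (-x) = phi x := by simp [phi, neg_sq]

lemma hasDerivAt_G {k : ℝ} (hk : 0 < k) {c : ℝ} (hc : c ∈ Ioo (0:ℝ) 1) :
    HasDerivAt (fun u => CBS k (2 * k / YBS k u)) (-(2 * k) / (YBS k c) ^ 2) c := by
  have hypos : 0 < YBS k c := (YBS_spec hk hc).1
  set y := YBS k c with hy
  have hinner : HasDerivAt (fun u => 2 * k / YBS k u)
      (2 * k * (-(phi (-k / y + y / 2))⁻¹ / y ^ 2)) c := by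
    have h1 := ((hasDerivAt_YBS hk hc).inv hypos.ne').const_mul (2 * k)
    simp_rw [div_eq_mul_inv]
    exact h1
  have houter := hasDerivAt_CBS k (y := 2 * k / y) (by positivity)
  have hcomp := houter.comp c hinner
  have harg : -k / (2 * k / y) + 2 * k / y / 2 = -(-k / y + y / 2) := by
    field_simp
    ring
  rw [harg, phi_neg] at hcomp
  refine hcomp.congr_deriv ?_
  have hphi := (phi_pos (-k / y + y / 2)).ne'
  have hcalc : phi (-k / y + y / 2) * (2 * k * (-(phi (-k / y + y / 2))⁻¹ / y ^ 2))
      = -(2 * k) * (phi (-k / y + y / 2) * (phi (-k / y + y / 2))⁻¹) / y ^ 2 := by ring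
  rw [hcalc, mul_inv_cancel₀ hphi, mul_one]

lemma f_continuousOn {k : ℝ} (hk : 0 < k) :
    ContinuousOn (fun u => 2 * k / (YBS k u) ^ 2) (Ioo (0:ℝ) 1) := by
  intro c hc
  have h1 : ContinuousAt (fun u => 2 * k / (YBS k u) ^ 2) c := by
    have hY := YBS_continuousAt hk hc
    have hne : (YBS k c) ^ 2 ≠ 0 := pow_ne_zero _ (YBS_spec hk hc).1.ne'
    exact (continuousAt_const.div (hY.pow 2) hne)
  exact h1.continuousWithinAt

lemma integral_f_sub {k : ℝ} (hk : 0 < k) {ε c : ℝ} (hε : 0 < ε) (hεc : ε ≤ c)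
    (hc : c < 1) :
    ∫ u in ε..c, 2 * k / (YBS k u) ^ 2
      = CBS k (2 * k / YBS k ε) - CBS k (2 * k / YBS k c) := by
  have hsub : uIcc ε c ⊆ Ioo (0:ℝ) 1 := by
    rw [uIcc_of_le hεc]
    intro u hu
    exact ⟨lt_of_lt_of_le hε hu.1, lt_of_le_of_lt hu.2 hc⟩
  have hderiv : ∀ u ∈ uIcc ε c,
      HasDerivAt (fun v => -CBS k (2 * k / YBS k v)) (2 * k / (YBS k u) ^ 2) u := by
    intro u hu
    have := (hasDerivAt_G hk (hsub hu)).neg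
    exact this.congr_deriv (by ring)
  have hint : IntervalIntegrable (fun u => 2 * k / (YBS k u) ^ 2) volume ε c :=
    ((f_continuousOn hk).mono hsub).intervalIntegrable
  have := intervalIntegral.integral_eq_sub_of_hasDerivAt hderiv hint
  rw [this]
  ring

lemma YBS_tendsto_zero {k : ℝ} (hk : 0 < k) :
    Tendsto (YBS k) (𝓝[>] (0:ℝ)) (𝓝[>] (0:ℝ)) := by
  rw [tendsto_nhdsWithin_iff]
  constructor
  · rw [Metric.tendsto_nhds]
    intro δ hδ
    have hδ2 : 0 < CBS k (δ / 2) := CBS_pos hk (by linarith)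
    have hmem : Ioo (0:ℝ) (min (CBS k (δ/2)) 1) ∈ 𝓝[>] (0:ℝ) :=
      Ioo_mem_nhdsGT_of_mem ⟨le_refl _, lt_min hδ2 one_pos⟩
    filter_upwards [hmem] with c hc
    have hc1 : c ∈ Ioo (0:ℝ) 1 := ⟨hc.1, lt_of_lt_of_le hc.2 (min_le_right _ _)⟩
    obtain ⟨hY, hCY⟩ := YBS_spec hk hc1
    have hlt : YBS k c < δ / 2 := by
      by_contra hge
      push_neg at hge
      have := (CBS_strictMonoOn (k := k)).monotoneOn (by simp; linarith : (δ/2) ∈ Ioi (0:ℝ))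
        (by exact hY : YBS k c ∈ Ioi (0:ℝ)) hge
      rw [hCY] at this
      exact absurd (lt_of_le_of_lt this (lt_of_lt_of_le hc.2 (min_le_left _ _)))
        (lt_irrefl _)
    rw [Real.dist_eq, sub_zero, abs_of_pos hY]
    linarith
  · filter_upwards [Ioo_mem_nhdsGT_of_mem ⟨le_refl (0:ℝ), one_pos⟩] with c hc
    exact (YBS_spec hk hc).1

lemma G_tendsto_one {k : ℝ} (hk : 0 < k) :
    Tendsto (fun c => CBS k (2 * k / YBS k c)) (𝓝[>] (0:ℝ)) (𝓝 1) := by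
  have h1 : Tendsto (fun c => 2 * k / YBS k c) (𝓝[>] (0:ℝ)) atTop := by
    have hinv : Tendsto (fun c => (YBS k c)⁻¹) (𝓝[>] (0:ℝ)) atTop :=
      tendsto_inv_nhdsGT_zero.comp (YBS_tendsto_zero hk)
    have := hinv.const_mul_atTop (by linarith : (0:ℝ) < 2 * k)
    simpa [div_eq_mul_inv] using this
  exact (CBS_tendsto_one hk).comp h1

lemma seq_tendsto (c : ℝ) : Tendsto (fun n : ℕ => c / (n + 2)) atTop (𝓝 0) := by
  apply Tendsto.div_atTop (tendsto_const_nhds)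
  exact tendsto_atTop_add_const_right atTop 2 tendsto_natCast_atTop_atTop

lemma integral_f_Ioc_eq {k : ℝ} (hk : 0 < k) {ε c : ℝ} (hε : 0 < ε) (hεc : ε ≤ c)
    (hc : c < 1) :
    ∫ u in Ioc ε c, 2 * k / (YBS k u) ^ 2
      = CBS k (2 * k / YBS k ε) - CBS k (2 * k / YBS k c) := by
  rw [← intervalIntegral.integral_of_le hεc]
  exact integral_f_sub hk hε hεc hc

lemma G_mem {k : ℝ} (hk : 0 < k) {c : ℝ} (hc : c ∈ Ioo (0:ℝ) 1) :
    CBS k (2 * k / YBS k c) ∈ Ioo (0:ℝ) 1 := by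
  have hY : 0 < YBS k c := (YBS_spec hk hc).1
  have h2 : 0 < 2 * k / YBS k c := by positivity
  exact ⟨CBS_pos hk h2, CBS_lt_one h2⟩

lemma integrableOn_f {k : ℝ} (hk : 0 < k) {c : ℝ} (hc : c ∈ Ioo (0:ℝ) 1) :
    IntegrableOn (fun u => 2 * k / (YBS k u) ^ 2) (Ioc 0 c) := by
  set f : ℝ → ℝ := fun u => 2 * k / (YBS k u) ^ 2 with hf
  set a : ℕ → ℝ := fun n => c / (n + 2) with ha
  have han : ∀ n : ℕ, 0 < a n ∧ a n ≤ c := by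
    intro n
    constructor
    · apply div_pos hc.1; positivity
    · rw [div_le_iff₀ (by positivity)]
      nlinarith [hc.1]
  have hsub : ∀ n : ℕ, Icc (a n) c ⊆ Ioo (0:ℝ) 1 := fun n u hu =>
    ⟨lt_of_lt_of_le (han n).1 hu.1, lt_of_le_of_lt hu.2 hc.2⟩
  have hfi : ∀ n : ℕ, IntegrableOn f (Ioc (a n) c) := by
    intro n
    exact (((f_continuousOn hk).mono (hsub n)).integrableOn_Icc).mono_set Ioc_subset_Icc_self
  refine integrableOn_Ioc_of_intervalIntegral_norm_bounded_left (I := 1)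
    hfi (seq_tendsto c) ?_
  filter_upwards with n
  have hnn : ∀ u, 0 ≤ f u := by
    intro u
    apply div_nonneg (by linarith) (sq_nonneg _)
  have heq : ∫ x in Ioc (a n) c, ‖f x‖ = ∫ x in Ioc (a n) c, f x := by
    congr 1
    funext x
    exact Real.norm_of_nonneg (hnn x)
  rw [heq, integral_f_Ioc_eq hk (han n).1 (han n).2 hc.2]
  have h1 := (G_mem hk (hsub n ⟨le_refl _, (han n).2⟩)).2
  have h2 := (G_mem hk hc).1
  linarith

lemma integral_f {k : ℝ} (hk : 0 < k) {c : ℝ} (hc : c ∈ Ioo (0:ℝ) 1) :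
    ∫ u in (0:ℝ)..c, 2 * k / (YBS k u) ^ 2 = 1 - CBS k (2 * k / YBS k c) := by
  set f : ℝ → ℝ := fun u => 2 * k / (YBS k u) ^ 2 with hf
  set a : ℕ → ℝ := fun n => c / (n + 2) with ha
  have han : ∀ n : ℕ, 0 < a n ∧ a n ≤ c := by
    intro n
    constructor
    · apply div_pos hc.1; positivity
    · rw [div_le_iff₀ (by positivity)]
      nlinarith [hc.1]
  have hInt := integrableOn_f hk hc
  have hcov : AECover (volume.restrict (Ioc (0:ℝ) c)) atTop (fun n => Ioc (a n) c) :=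
    aecover_Ioc_of_Ioc (seq_tendsto c) tendsto_const_nhds
  have hTend := hcov.integral_tendsto_of_countably_generated hInt
  have hEq : ∀ n : ℕ, ∫ x in Ioc (a n) c, f x ∂(volume.restrict (Ioc (0:ℝ) c))
      = CBS k (2 * k / YBS k (a n)) - CBS k (2 * k / YBS k c) := by
    intro n
    rw [Measure.restrict_restrict measurableSet_Ioc,
      inter_eq_left.mpr (Ioc_subset_Ioc_left (han n).1.le)]
    exact integral_f_Ioc_eq hk (han n).1 (han n).2 hc.2
  have haW : Tendsto a atTop (𝓝[>] (0:ℝ)) := by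
    rw [tendsto_nhdsWithin_iff]
    exact ⟨seq_tendsto c, Eventually.of_forall fun n => (han n).1⟩
  have hTend2 : Tendsto (fun n => ∫ x in Ioc (a n) c, f x ∂(volume.restrict (Ioc (0:ℝ) c)))
      atTop (𝓝 (1 - CBS k (2 * k / YBS k c))) := by
    have hG := ((G_tendsto_one hk).comp haW).sub
      (tendsto_const_nhds (x := CBS k (2 * k / YBS k c)))
    refine Tendsto.congr (fun n => (hEq n).symm) hG
  have hlim := tendsto_nhds_unique hTend hTend2
  rw [intervalIntegral.integral_of_le hc.1.le]
  exact hlim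

theorem stmt_6 (k : ℝ) (hk : 0 < k) :
    ConvexOn ℝ (Set.Ioo 0 1) (fun c => 1 - ∫ u in (0:ℝ)..c, 2 * k / (YBS k u) ^ 2) ∧
    ∀ c : ℝ, 0 < c → c < 1 →
      (1 - ∫ u in (0:ℝ)..(1 - ∫ u in (0:ℝ)..c, 2 * k / (YBS k u) ^ 2),
        2 * k / (YBS k u) ^ 2) = c := by
  set F : ℝ → ℝ := fun c => 1 - ∫ u in (0:ℝ)..c, 2 * k / (YBS k u) ^ 2 with hF
  set G : ℝ → ℝ := fun c => CBS k (2 * k / YBS k c) with hG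
  have hFG : ∀ c ∈ Ioo (0:ℝ) 1, F c = G c := by
    intro c hc
    rw [hF]
    simp only
    rw [integral_f hk hc]
    ring
  have hFderiv : ∀ c ∈ Ioo (0:ℝ) 1, HasDerivAt F (-(2 * k) / (YBS k c) ^ 2) c := by
    intro c hc
    have hev : G =ᶠ[𝓝 c] F := by
      filter_upwards [isOpen_Ioo.mem_nhds hc] with u hu
      exact (hFG u hu).symm
    exact (hasDerivAt_G hk hc).congr_of_eventuallyEq hev.symm
  constructor
  · refine MonotoneOn.convexOn_of_deriv (convex_Ioo 0 1) ?_ ?_ ?_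
    · intro c hc
      exact ((hFderiv c hc).continuousAt).continuousWithinAt
    · rw [interior_Ioo]
      intro c hc
      exact ((hFderiv c hc).differentiableAt).differentiableWithinAt
    · rw [interior_Ioo]
      intro c hc c' hc' hle
      rw [(hFderiv c hc).deriv, (hFderiv c' hc').deriv]
      have hYc : 0 < YBS k c := (YBS_spec hk hc).1
      have hYle : YBS k c ≤ YBS k c' := (YBS_strictMonoOn hk).monotoneOn hc hc' hle
      have hsq : (YBS k c) ^ 2 ≤ (YBS k c') ^ 2 := by nlinarith
      have := div_le_div_of_nonneg_left (by linarith : (0:ℝ) ≤ 2 * k)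
        (by positivity : (0:ℝ) < (YBS k c) ^ 2) hsq
      rw [neg_div, neg_div]
      linarith
  · intro c hc0 hc1
    have hc : c ∈ Ioo (0:ℝ) 1 := ⟨hc0, hc1⟩
    have hYc : 0 < YBS k c := (YBS_spec hk hc).1
    have h2k : 0 < 2 * k / YBS k c := by positivity
    have hFc : F c = G c := hFG c hc
    have hGmem : G c ∈ Ioo (0:ℝ) 1 := G_mem hk hc
    have hFmem : F c ∈ Ioo (0:ℝ) 1 := hFc ▸ hGmem
    have hYF : YBS k (F c) = 2 * k / YBS k c := by
      rw [hFc, hG]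
      exact YBS_CBS hk h2k
    have : F (F c) = G (F c) := hFG _ hFmem
    rw [show (1 - ∫ u in (0:ℝ)..(1 - ∫ u in (0:ℝ)..c, 2 * k / (YBS k u) ^ 2),
        2 * k / (YBS k u) ^ 2) = F (F c) from rfl, this, hG]
    simp only
    rw [hYF]
    have harg : 2 * k / (2 * k / YBS k c) = YBS k c := by
      field_simp
    rw [harg]
    exact (YBS_spec hk hc).2
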